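/- Let p ≥ 1 be an integer and let v : ℤ → ℝ be a bounded function with v_n = 0 for all integers n with 1 ≤ n ≤ p. Let H be the bounded self-adjoint operator on ℓ²(ℤ) defined by (Hψ)_n = ψ_{n+1} + ψ_{n−1} + v_n ψ_n. Then for every integer k with 1 ≤ k ≤ p, dist(2cos(πk/(p+1)), spectrum(H)) ≤ 18 k / p^{3/2}. -/

import Mathlib

open scoped ENNReal



set_option maxHeartbeats 1000000 in
lemma infDist_spectrum_mul_norm_le
    {E : Type*} [NormedAddCommGroup E] [InnerProductSpace ℂ E] [CompleteSpace E]
    (H : E →L[ℂ] E) (hsa : IsSelfAdjoint H) (lam : ℝ) (ψ : E) :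
    Metric.infDist (lam : ℂ) (spectrum ℂ H) * ‖ψ‖ ≤ ‖H ψ - (lam : ℂ) • ψ‖ := by
  set d := Metric.infDist (lam : ℂ) (spectrum ℂ H) with hd
  rcases le_or_gt d 0 with hd0 | hd0
  · calc d * ‖ψ‖ ≤ 0 := mul_nonpos_of_nonpos_of_nonneg hd0 (norm_nonneg ψ)
      _ ≤ _ := norm_nonneg _
  · have hlam : (lam : ℂ) ∉ spectrum ℂ H := by
      intro h
      simp [hd, Metric.infDist_zero_of_mem h] at hd0
    have hU : IsUnit (algebraMap ℂ (E →L[ℂ] E) (lam : ℂ) - H) := spectrum.notMem_iff.mp hlam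
    obtain ⟨u, hu⟩ := hU
    have sa0 : IsSelfAdjoint (algebraMap ℂ (E →L[ℂ] E) (lam : ℂ)) := by
      rw [isSelfAdjoint_iff, ← algebraMap_star_comm, Complex.star_def, Complex.conj_ofReal]
    have sa1 : IsSelfAdjoint ((u : E →L[ℂ] E)) := by rw [hu]; exact sa0.sub hsa
    have hustar : star u = u := Units.ext (by simpa using sa1.star_eq)
    have sa_inv : IsSelfAdjoint ((↑u⁻¹ : E →L[ℂ] E)) := by
      rw [IsSelfAdjoint, ← Units.coe_star_inv, hustar]
    -- bound on the norm of the inverse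
    have hinv : ‖(↑u⁻¹ : E →L[ℂ] E)‖ ≤ 1 / d := by
      have key : (‖(↑u⁻¹ : E →L[ℂ] E)‖₊ : ℝ≥0∞) ≤ ENNReal.ofReal (1 / d) := by
        rw [← sa_inv.spectralRadius_eq_nnnorm, spectralRadius]
        refine iSup₂_le fun k hk => ?_
        have hk0 : k ≠ 0 := by
          intro h
          rw [h] at hk
          exact (spectrum.zero_notMem_iff ℂ).mpr u⁻¹.isUnit hk
        have hk1 : ((Units.mk0 k hk0 : ℂˣ) : ℂ) ∈ spectrum ℂ ((u⁻¹ : (E →L[ℂ] E)ˣ) : E →L[ℂ] E) := hk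
        have hk' := spectrum.inv_mem_iff.mp hk1
        rw [inv_inv] at hk'
        simp only [Units.val_inv_eq_inv_val, Units.val_mk0] at hk'
        rw [hu, ← spectrum.singleton_sub_eq] at hk'
        obtain ⟨x, hx, y, hy, hxy⟩ := hk'
        simp only [Set.mem_singleton_iff] at hx
        have hdx : d ≤ ‖k⁻¹‖ := by
          rw [← hxy, hx]
          have h5 : d ≤ dist (lam : ℂ) y := Metric.infDist_le_dist_of_mem hy
          simpa [dist_eq_norm] using h5
        have hnk : ‖k‖ ≤ 1 / d := by
          rw [norm_inv] at hdx
          rw [le_inv_comm₀ hd0 (norm_pos_iff.mpr hk0)] at hdx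
          simpa [one_div] using hdx
        calc (‖k‖₊ : ℝ≥0∞) = ENNReal.ofReal ‖k‖ := (ofReal_norm k).symm
          _ ≤ ENNReal.ofReal (1 / d) := ENNReal.ofReal_le_ofReal hnk
      have h2 := ENNReal.toReal_mono (by simp) key
      rwa [ENNReal.coe_toReal, ENNReal.toReal_ofReal (by positivity : (0:ℝ) ≤ 1 / d),
        coe_nnnorm] at h2
    have hψ : ψ = (↑u⁻¹ : E →L[ℂ] E) ((↑u : E →L[ℂ] E) ψ) := by
      have h3 : ((↑u⁻¹ : E →L[ℂ] E) * (↑u : E →L[ℂ] E)) ψ = ψ := by rw [u.inv_mul]; rfl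
      rw [ContinuousLinearMap.mul_apply] at h3
      exact h3.symm
    have huψ : ‖(↑u : E →L[ℂ] E) ψ‖ = ‖H ψ - (lam : ℂ) • ψ‖ := by
      rw [hu]
      have h4 : (algebraMap ℂ (E →L[ℂ] E) (lam : ℂ) - H) ψ = (lam : ℂ) • ψ - H ψ := by
        simp [Algebra.algebraMap_eq_smul_one]
      rw [h4, norm_sub_rev]
    have h1 : ‖ψ‖ ≤ (1 / d) * ‖H ψ - (lam : ℂ) • ψ‖ := by
      calc ‖ψ‖ = ‖(↑u⁻¹ : E →L[ℂ] E) ((↑u : E →L[ℂ] E) ψ)‖ := by rw [← hψ]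
        _ ≤ ‖(↑u⁻¹ : E →L[ℂ] E)‖ * ‖(↑u : E →L[ℂ] E) ψ‖ := ContinuousLinearMap.le_opNorm _ _
        _ ≤ (1 / d) * ‖H ψ - (lam : ℂ) • ψ‖ := by
            rw [huψ]; exact mul_le_mul_of_nonneg_right hinv (norm_nonneg _)
    calc d * ‖ψ‖ ≤ d * ((1 / d) * ‖H ψ - (lam : ℂ) • ψ‖) :=
          mul_le_mul_of_nonneg_left h1 hd0.le
      _ = ‖H ψ - (lam : ℂ) • ψ‖ := by field_simp


lemma cos_sum_eq_zero (p k : ℕ) (hk1 : 1 ≤ k) (hkp : k ≤ p) :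
    ∑ n ∈ Finset.range (p + 1), Real.cos (2 * n * (Real.pi * k / (p + 1))) = 0 := by
  set θ : ℝ := Real.pi * k / (p + 1) with hθ
  have hp1 : (0:ℝ) < (p:ℝ) + 1 := by positivity
  have hθpos : 0 < θ := by
    rw [hθ]
    have : (0:ℝ) < (k:ℝ) := by exact_mod_cast hk1
    positivity
  have hθlt : θ < Real.pi := by
    rw [hθ, div_lt_iff₀ hp1]
    have hkp' : (k:ℝ) < (p:ℝ) + 1 := by exact_mod_cast Nat.lt_succ_of_le hkp
    calc Real.pi * k < Real.pi * ((p:ℝ)+1) := by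
          exact mul_lt_mul_of_pos_left hkp' Real.pi_pos
      _ = Real.pi * ((p:ℝ)+1) := rfl
  set z : ℂ := Complex.exp ((2 * θ : ℝ) * Complex.I) with hz
  have hz1 : z ≠ 1 := by
    rw [hz, Ne, Complex.exp_eq_one_iff]
    rintro ⟨m, hm⟩
    have hI : ((2 * θ : ℝ) : ℂ) = (m : ℂ) * (2 * Real.pi) := by
      have := hm
      rw [show (m : ℂ) * (2 * (Real.pi : ℂ) * Complex.I) = ((m : ℂ) * (2 * Real.pi)) * Complex.I by ring] at this
      exact mul_right_cancel₀ Complex.I_ne_zero this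
    have hre : (2 * θ : ℝ) = (m : ℝ) * (2 * Real.pi) := by exact_mod_cast hI
    have h1 : 0 < (m : ℝ) * (2 * Real.pi) := by rw [← hre]; positivity
    have h2 : (m : ℝ) * (2 * Real.pi) < 1 * (2 * Real.pi) := by
      rw [← hre]; nlinarith [Real.pi_pos]
    have hm0 : (0:ℝ) < (m:ℝ) := by nlinarith [Real.pi_pos]
    have hm1 : (m:ℝ) < 1 := by nlinarith [Real.pi_pos]
    have : (0:ℤ) < m := by exact_mod_cast hm0
    have : m < 1 := by exact_mod_cast hm1
    omega
  have hzp : z ^ (p + 1) = 1 := by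
    rw [hz, ← Complex.exp_nat_mul]
    have harg : ((p:ℂ) + 1) * (((2 * θ : ℝ) : ℂ) * Complex.I) = (k : ℤ) * (2 * Real.pi * Complex.I) := by
      have hr : ((p:ℝ) + 1) * (2 * θ) = (k:ℝ) * (2 * Real.pi) := by
        rw [hθ]; field_simp
      have : (((p:ℝ) + 1) * (2 * θ) : ℂ) = ((k:ℝ) * (2 * Real.pi) : ℂ) := by
        exact_mod_cast congrArg (fun x : ℝ => (x : ℂ)) hr
      push_cast at this ⊢
      rw [show ((p:ℂ) + 1) * (((2:ℂ) * (θ:ℂ)) * Complex.I) = (((p:ℂ) + 1) * ((2:ℂ) * (θ:ℂ))) * Complex.I by ring]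
      rw [this]; ring
    push_cast at harg ⊢
    rw [harg]
    exact_mod_cast Complex.exp_int_mul_two_pi_mul_I (k : ℤ)
  have hsum : ∑ n ∈ Finset.range (p + 1), z ^ n = 0 := by
    rw [geom_sum_eq hz1, hzp, sub_self, zero_div]
  have hterm : ∀ n : ℕ, (z ^ n).re = Real.cos (2 * n * θ) := by
    intro n
    rw [hz, ← Complex.exp_nat_mul]
    have : (n : ℂ) * (((2 * θ : ℝ) : ℂ) * Complex.I) = ((2 * n * θ : ℝ) : ℂ) * Complex.I := by
      push_cast; ring
    rw [this, Complex.exp_ofReal_mul_I_re]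
  calc ∑ n ∈ Finset.range (p + 1), Real.cos (2 * n * θ)
      = ∑ n ∈ Finset.range (p + 1), (z ^ n).re := by
        exact Finset.sum_congr rfl fun n _ => (hterm n).symm
    _ = (∑ n ∈ Finset.range (p + 1), z ^ n).re := by
        rw [Complex.re_sum]
    _ = 0 := by rw [hsum]; rfl

lemma sin_sq_sum (p k : ℕ) (hk1 : 1 ≤ k) (hkp : k ≤ p) :
    ∑ n ∈ Finset.range (p + 1), Real.sin (n * (Real.pi * k / (p + 1))) ^ 2 = ((p:ℝ) + 1) / 2 := by
  have h := cos_sum_eq_zero p k hk1 hkp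
  have : ∀ n : ℕ, Real.sin ((n : ℝ) * (Real.pi * k / (p + 1))) ^ 2
      = 1 / 2 - Real.cos (2 * n * (Real.pi * k / (p + 1))) / 2 := by
    intro n
    rw [Real.sin_sq_eq_half_sub]
    ring_nf
  rw [Finset.sum_congr rfl fun n _ => this n]
  rw [Finset.sum_sub_distrib, Finset.sum_const, ← Finset.sum_div, h]
  simp
  ring

set_option maxHeartbeats 2000000 in
/-- **Spectral information for polymer potentials** (deterministic content of Proposition 4.3).
Let `H` be the discrete Schrödinger operator on `ℓ²(ℤ)` with a bounded potential `v` that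
vanishes on the sites `1, …, p`. Then for every `1 ≤ k ≤ p`, the point `2 cos (π k/(p+1))`
lies within distance `18 k / p^{3/2}` of the spectrum of `H`. -/
theorem spectral_information (p : ℕ) (hp : 1 ≤ p) (v : ℤ → ℝ)
    (hvbdd : ∃ C : ℝ, ∀ n : ℤ, |v n| ≤ C)
    (hv0 : ∀ n : ℤ, 1 ≤ n → n ≤ (p : ℤ) → v n = 0)
    (H : lp (fun _ : ℤ => ℂ) 2 →L[ℂ] lp (fun _ : ℤ => ℂ) 2)
    (hH : ∀ ψ : lp (fun _ : ℤ => ℂ) 2, ∀ n : ℤ,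
      (H ψ : ∀ _ : ℤ, ℂ) n = ψ (n + 1) + ψ (n - 1) + (v n : ℂ) * ψ n)
    (hsa : IsSelfAdjoint H) :
    ∀ k : ℕ, 1 ≤ k → k ≤ p →
      Metric.infDist ((2 * Real.cos (Real.pi * k / (p + 1)) : ℝ) : ℂ) (spectrum ℂ H) ≤
        18 * k / (p : ℝ) ^ ((3 : ℝ) / 2) := by
  intro k hk1 hkp
  set θ : ℝ := Real.pi * k / (p + 1) with hθ
  set lam : ℝ := 2 * Real.cos θ with hlam
  set f : ℤ → ℂ := fun n => if 1 ≤ n ∧ n ≤ (p:ℤ) then ((Real.sin (n * θ) : ℝ) : ℂ) else 0 with hf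
  have hfin : Set.Finite {n : ℤ | f n ≠ 0} := by
    apply Set.Finite.subset (Finset.Icc (1:ℤ) (p:ℤ)).finite_toSet
    intro n hn
    simp only [hf, Set.mem_setOf_eq, ne_eq] at hn
    by_contra hc
    simp only [Finset.coe_Icc, Set.mem_Icc, not_and_or, not_le] at hc
    exact hn (by rw [if_neg (by rintro ⟨h1, h2⟩; rcases hc with hc | hc <;> omega)])
  have hmem : Memℓp f 2 := (memℓp_zero hfin).of_exponent_ge (by norm_num)
  set ψ : lp (fun _ : ℤ => ℂ) 2 := ⟨f, hmem⟩ with hψdef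
  have hψco : ∀ n : ℤ, (ψ : ∀ _ : ℤ, ℂ) n = f n := fun n => rfl
  have hsinend : Real.sin (((p:ℝ) + 1) * θ) = 0 := by
    have h : ((p:ℝ) + 1) * θ = (k:ℝ) * Real.pi := by rw [hθ]; field_simp
    rw [h]; exact_mod_cast Real.sin_nat_mul_pi k
  have hfval : ∀ m : ℤ, 0 ≤ m → m ≤ (p:ℤ) + 1 → f m = ((Real.sin (m * θ) : ℝ) : ℂ) := by
    intro m h0 h1
    by_cases hin : 1 ≤ m ∧ m ≤ (p:ℤ)
    · simp only [hf]; rw [if_pos hin]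
    · have h : m = 0 ∨ m = (p:ℤ) + 1 := by omega
      rcases h with h | h
      · simp only [hf, h]; rw [if_neg (by omega)]; norm_num
      · simp only [hf, h]; rw [if_neg (by omega)]
        rw [show (((p:ℤ) + 1 : ℤ) : ℝ) = (p:ℝ) + 1 by push_cast; ring, hsinend]
        norm_num
  have hfzero : ∀ m : ℤ, ¬(1 ≤ m ∧ m ≤ (p:ℤ)) → f m = 0 := by
    intro m hm
    simp only [hf]
    rw [if_neg hm]
  -- the error coordinates
  set Efun : ℤ → ℂ := fun n => if n = 0 then ((Real.sin θ : ℝ) : ℂ)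
    else if n = (p:ℤ) + 1 then ((Real.sin ((p:ℝ) * θ) : ℝ) : ℂ) else 0 with hE
  have herr : ∀ n : ℤ, (H ψ : ∀ _ : ℤ, ℂ) n - ((lam : ℝ) : ℂ) * f n = Efun n := by
    intro n
    rw [hH ψ n, hψco, hψco, hψco]
    by_cases h0 : n = 0
    · subst h0
      norm_num
      rw [hfval 1 (by omega) (by omega), hfzero (-1) (by omega), hfzero 0 (by omega)]
      simp only [hE, if_pos rfl]
      push_cast
      rw [one_mul]
      ring
    by_cases hp1 : n = (p:ℤ) + 1
    · subst hp1
      rw [show (p:ℤ) + 1 + 1 = (p:ℤ) + 2 by ring, show (p:ℤ) + 1 - 1 = (p:ℤ) by ring]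
      rw [hfzero ((p:ℤ) + 2) (by omega), hfval (p:ℤ) (by omega) (by omega),
        hfzero ((p:ℤ) + 1) (by omega)]
      simp only [hE, if_neg (by omega : ¬ (p:ℤ) + 1 = 0), if_pos rfl]
      push_cast
      ring
    by_cases hin : 1 ≤ n ∧ n ≤ (p:ℤ)
    · obtain ⟨h1, h2⟩ := hin
      rw [hfval (n + 1) (by omega) (by omega), hfval (n - 1) (by omega) (by omega),
        hfval n (by omega) (by omega), hv0 n h1 h2]
      simp only [hE, if_neg (by omega : ¬ n = 0), if_neg (by omega : ¬ n = (p:ℤ) + 1)]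
      have hreal : Real.sin (((n:ℝ) + 1) * θ) + Real.sin (((n:ℝ) - 1) * θ)
          - 2 * Real.cos θ * Real.sin ((n:ℝ) * θ) = 0 := by
        have e1 : ((n:ℝ) + 1) * θ = (n:ℝ) * θ + θ := by ring
        have e2 : ((n:ℝ) - 1) * θ = (n:ℝ) * θ - θ := by ring
        rw [e1, e2, Real.sin_add, Real.sin_sub]
        ring
      rw [hlam]
      push_cast
      rw [show ((n:ℂ) + 1) * (θ:ℂ) = (n:ℂ) * θ + θ by ring,
        show ((n:ℂ) - 1) * (θ:ℂ) = (n:ℂ) * θ - θ by ring,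
        Complex.sin_add, Complex.sin_sub]
      ring
    · rw [hfzero (n + 1) (by omega), hfzero (n - 1) (by omega), hfzero n (by omega)]
      simp only [hE, if_neg h0, if_neg hp1]
      ring
  -- the error vector
  set g : lp (fun _ : ℤ => ℂ) 2 := H ψ - ((lam : ℝ) : ℂ) • ψ with hg
  have hgco : ∀ n : ℤ, (g : ∀ _ : ℤ, ℂ) n = Efun n := by
    intro n
    rw [hg]
    rw [show ((H ψ - ((lam : ℝ) : ℂ) • ψ : lp (fun _ : ℤ => ℂ) 2) : ∀ _ : ℤ, ℂ) n
      = (H ψ : ∀ _ : ℤ, ℂ) n - (((lam : ℝ) : ℂ) • ψ : lp (fun _ : ℤ => ℂ) 2) n from by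
        rw [lp.coeFn_sub]; rfl]
    rw [show ((((lam : ℝ) : ℂ) • ψ : lp (fun _ : ℤ => ℂ) 2) : ∀ _ : ℤ, ℂ) n
      = ((lam : ℝ) : ℂ) * (ψ : ∀ _ : ℤ, ℂ) n from by rw [lp.coeFn_smul]; rfl]
    rw [hψco]
    exact herr n
  have h2pos : 0 < (2 : ℝ≥0∞).toReal := by norm_num
  have hrpow2 : ∀ x : ℝ, x ^ ((2 : ℝ≥0∞).toReal) = x ^ (2:ℕ) := by
    intro x
    rw [show ((2 : ℝ≥0∞).toReal) = ((2:ℕ):ℝ) by norm_num, Real.rpow_natCast]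
  -- norm of g
  have hsp : Real.sin ((p:ℝ) * θ) ^ 2 = Real.sin θ ^ 2 := by
    have hpθ : (p:ℝ) * θ = (k:ℝ) * Real.pi - θ := by rw [hθ]; field_simp; ring
    have hs0 : Real.sin ((k:ℝ) * Real.pi) = 0 := by exact_mod_cast Real.sin_nat_mul_pi k
    have hc : Real.cos ((k:ℝ) * Real.pi) ^ 2 = 1 := by
      nlinarith [Real.sin_sq_add_cos_sq ((k:ℝ) * Real.pi)]
    rw [hpθ, Real.sin_sub, hs0]
    linear_combination Real.sin θ ^ 2 * hc
  have hg2 : ‖g‖ ^ (2:ℕ) = 2 * Real.sin θ ^ 2 := by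
    have h := lp.norm_rpow_eq_tsum h2pos g
    rw [hrpow2] at h
    have h' : ∑' n : ℤ, ‖(g : ∀ _ : ℤ, ℂ) n‖ ^ ((2 : ℝ≥0∞).toReal)
        = ∑' n : ℤ, ‖Efun n‖ ^ (2:ℕ) :=
      tsum_congr fun n => by rw [hgco n, hrpow2]
    rw [h', tsum_eq_sum (s := ({0, (p:ℤ)+1} : Finset ℤ)) ?_] at h
    · rw [Finset.sum_pair (show (0:ℤ) ≠ (p:ℤ)+1 by omega)] at h
      rw [h]
      have hE0 : ‖Efun 0‖ ^ 2 = Real.sin θ ^ 2 := by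
        simp only [hE, if_pos rfl]
        rw [Complex.norm_real, Real.norm_eq_abs, sq_abs]
      have hEp : ‖Efun ((p:ℤ)+1)‖ ^ 2 = Real.sin ((p:ℝ) * θ) ^ 2 := by
        simp only [hE, if_neg (show ¬ (p:ℤ)+1 = 0 by omega), eq_self_iff_true, if_true]
        rw [Complex.norm_real, Real.norm_eq_abs, sq_abs]
      rw [hE0, hEp, hsp]
      ring
    · intro b hb
      simp only [Finset.mem_insert, Finset.mem_singleton, not_or] at hb
      simp only [hE, if_neg hb.1, if_neg hb.2]
      simp
  -- norm of ψ
  have hψ2 : ‖ψ‖ ^ (2:ℕ) = ((p:ℝ) + 1) / 2 := by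
    have h := lp.norm_rpow_eq_tsum h2pos ψ
    rw [hrpow2] at h
    have h' : ∑' n : ℤ, ‖(ψ : ∀ _ : ℤ, ℂ) n‖ ^ ((2 : ℝ≥0∞).toReal)
        = ∑' n : ℤ, ‖f n‖ ^ (2:ℕ) :=
      tsum_congr fun n => by rw [hψco n, hrpow2]
    rw [h', tsum_eq_sum (s := Finset.Icc (0:ℤ) (p:ℤ)) ?_] at h
    · rw [h]
      rw [show ∑ n ∈ Finset.Icc (0:ℤ) (p:ℤ), ‖f n‖ ^ (2:ℕ)
          = ∑ m ∈ Finset.range (p+1), Real.sin ((m:ℝ) * θ) ^ 2 from ?_]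
      · exact sin_sq_sum p k hk1 hkp
      · refine Finset.sum_bij' (fun n _ => n.toNat) (fun m _ => (m:ℤ)) ?_ ?_ ?_ ?_ ?_
        · intro a ha
          simp only [Finset.mem_Icc] at ha
          simp only [Finset.mem_range]
          omega
        · intro a ha
          simp only [Finset.mem_range] at ha
          simp only [Finset.mem_Icc]
          omega
        · intro a ha
          simp only [Finset.mem_Icc] at ha
          show ((a.toNat : ℤ)) = a
          omega
        · intro a ha
          show (((a : ℤ)).toNat) = a
          simp
        · intro a ha
          simp only [Finset.mem_Icc] at ha
          rw [hfval a ha.1 (by omega)]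
          rw [Complex.norm_real, Real.norm_eq_abs, sq_abs]
          rw [show ((a.toNat : ℕ) : ℝ) = (a : ℝ) by exact_mod_cast congrArg Int.cast (Int.toNat_of_nonneg ha.1)]
    · intro b hb
      simp only [Finset.mem_Icc, not_and_or, not_le] at hb
      rw [hfzero b (by omega)]
      simp
  -- positivity and basic facts
  have hppos : (0:ℝ) < (p:ℝ) := by exact_mod_cast hp
  have hθpos : 0 < θ := by
    rw [hθ]
    have hk' : (0:ℝ) < (k:ℝ) := by exact_mod_cast hk1
    positivity
  have hθleπ : θ ≤ Real.pi := by
    rw [hθ, div_le_iff₀ (by positivity)]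
    have hk' : (k:ℝ) ≤ (p:ℝ) + 1 := by
      have : (k:ℝ) ≤ (p:ℝ) := by exact_mod_cast hkp
      linarith
    nlinarith [Real.pi_pos]
  have hsinnn : 0 ≤ Real.sin θ := Real.sin_nonneg_of_nonneg_of_le_pi hθpos.le hθleπ
  have hψnorm : ‖ψ‖ = Real.sqrt (((p:ℝ) + 1) / 2) := by
    rw [← hψ2]; exact (Real.sqrt_sq (norm_nonneg ψ)).symm
  have hψpos : 0 < ‖ψ‖ := by rw [hψnorm]; positivity
  have hgnorm : ‖g‖ = Real.sqrt 2 * Real.sin θ := by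
    have h : ‖g‖ = Real.sqrt (2 * Real.sin θ ^ 2) := by
      rw [← hg2]; exact (Real.sqrt_sq (norm_nonneg g)).symm
    rw [h, Real.sqrt_mul (by norm_num : (0:ℝ) ≤ 2), Real.sqrt_sq hsinnn]
  have hkey := infDist_spectrum_mul_norm_le H hsa lam ψ
  rw [← hg] at hkey
  have hP3 : (0:ℝ) < (p:ℝ) ^ ((3:ℝ)/2) := Real.rpow_pos_of_pos hppos _
  have hA : (p:ℝ) ^ ((3:ℝ)/2) ≤ ((p:ℝ) + 1) * Real.sqrt ((p:ℝ) + 1) := by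
    have h1 : ((p:ℝ) + 1) * Real.sqrt ((p:ℝ) + 1) = ((p:ℝ) + 1) ^ ((3:ℝ)/2) := by
      rw [Real.sqrt_eq_rpow, show (3:ℝ)/2 = 1 + 1/2 by norm_num,
        Real.rpow_add (by positivity), Real.rpow_one]
    rw [h1]
    exact Real.rpow_le_rpow (by positivity) (by linarith) (by norm_num)
  calc Metric.infDist ((lam : ℝ) : ℂ) (spectrum ℂ H) ≤ ‖g‖ / ‖ψ‖ := by
        rw [le_div_iff₀ hψpos]; exact hkey
    _ = 2 * Real.sin θ / Real.sqrt ((p:ℝ) + 1) := by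
        rw [hgnorm, hψnorm, Real.sqrt_div (by positivity : (0:ℝ) ≤ (p:ℝ) + 1) 2,
          div_div_eq_mul_div]
        have h2 : Real.sqrt 2 * Real.sqrt 2 = 2 := Real.mul_self_sqrt (by norm_num)
        rw [show Real.sqrt 2 * Real.sin θ * Real.sqrt 2
          = (Real.sqrt 2 * Real.sqrt 2) * Real.sin θ by ring, h2]
    _ ≤ 2 * θ / Real.sqrt ((p:ℝ) + 1) := by
        gcongr
        exact Real.sin_le hθpos.le
    _ = 2 * Real.pi * (k:ℝ) / (((p:ℝ) + 1) * Real.sqrt ((p:ℝ) + 1)) := by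
        rw [hθ]
        have hsp1 : Real.sqrt ((p:ℝ) + 1) ≠ 0 := by positivity
        field_simp
    _ ≤ 18 * (k:ℝ) / (p:ℝ) ^ ((3:ℝ)/2) := by
        rw [div_le_div_iff₀ (by positivity) hP3]
        have hπ : Real.pi ≤ 4 := Real.pi_le_four
        have hk0 : (0:ℝ) ≤ (k:ℝ) := by positivity
        have h1 : 2 * Real.pi * (k:ℝ) * ((p:ℝ) ^ ((3:ℝ)/2))
            ≤ 8 * (k:ℝ) * ((p:ℝ) ^ ((3:ℝ)/2)) := by
          have := mul_le_mul_of_nonneg_right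
            (mul_le_mul_of_nonneg_right (by linarith : 2 * Real.pi ≤ 8) hk0) hP3.le
          linarith [this]
        have h2' : 8 * (k:ℝ) * ((p:ℝ) ^ ((3:ℝ)/2))
            ≤ 8 * (k:ℝ) * (((p:ℝ) + 1) * Real.sqrt ((p:ℝ) + 1)) :=
          mul_le_mul_of_nonneg_left hA (by positivity)
        have hkQ : (0:ℝ) ≤ (k:ℝ) * (((p:ℝ) + 1) * Real.sqrt ((p:ℝ) + 1)) := by positivity
        linarith [h1, h2', hkQ]
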